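/- (Lemma 1, full statement.) Consider the storage scheduling LP with η < 1 and a time period t with C_t < 0. For any optimal solution: if the net charge β_t = s_t − ρ·s_{t−1} equals Δt·η^C·P^C_max or equals −Δt·(1/η^D)·P^D_max, then there is no simultaneous charge and discharge at t; otherwise (i.e., −Δt·(1/η^D)·P^D_max < β_t < Δt·η^C·P^C_max), simultaneous charge and discharge occurs at t in every optimal solution. -/
import Mathlib


open Finset

def feasible (T : ℕ) (Δt ρ ηC ηD Slb Sub Sinit PC PD : ℝ)
    (s pC pD : ℕ → ℝ) : Prop :=
  s 0 = Sinit ∧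
  (∀ t ∈ Icc 1 T, s t = ρ * s (t - 1) + Δt * (ηC * pC t - (1 / ηD) * pD t)) ∧
  (∀ t ∈ Icc 1 T, Slb ≤ s t ∧ s t ≤ Sub) ∧
  (∀ t ∈ Icc 1 T, 0 ≤ pC t ∧ pC t ≤ PC) ∧
  (∀ t ∈ Icc 1 T, 0 ≤ pD t ∧ pD t ≤ PD)

def objective (T : ℕ) (Δt : ℝ) (C : ℕ → ℝ) (pC pD : ℕ → ℝ) : ℝ :=
  ∑ t ∈ Icc 1 T, Δt * C t * (pD t - pC t)

def optimal (T : ℕ) (Δt ρ ηC ηD Slb Sub Sinit PC PD : ℝ) (C : ℕ → ℝ)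
    (s pC pD : ℕ → ℝ) : Prop :=
  feasible T Δt ρ ηC ηD Slb Sub Sinit PC PD s pC pD ∧
  ∀ s' pC' pD', feasible T Δt ρ ηC ηD Slb Sub Sinit PC PD s' pC' pD' →
    objective T Δt C pC' pD' ≤ objective T Δt C pC pD

set_option maxHeartbeats 1000000 in
theorem stmt7 (T : ℕ) (Δt ρ ηC ηD Slb Sub Sinit PC PD : ℝ) (C : ℕ → ℝ)
    (hΔt : 0 < Δt) (hρ0 : 0 < ρ) (hρ1 : ρ ≤ 1)
    (hηC0 : 0 < ηC) (hηC1 : ηC ≤ 1) (hηD0 : 0 < ηD) (hηD1 : ηD ≤ 1)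
    (hη : ηC * ηD < 1) (hPC : 0 < PC) (hPD : 0 < PD)
    (s pC pD : ℕ → ℝ)
    (hopt : optimal T Δt ρ ηC ηD Slb Sub Sinit PC PD C s pC pD)
    (t : ℕ) (ht : t ∈ Icc 1 T) (hCt : C t < 0) :
    ((s t - ρ * s (t - 1) = Δt * ηC * PC ∨
      s t - ρ * s (t - 1) = -(Δt * (1 / ηD) * PD)) → pC t * pD t = 0) ∧
    ((-(Δt * (1 / ηD) * PD) < s t - ρ * s (t - 1) ∧
      s t - ρ * s (t - 1) < Δt * ηC * PC) → 0 < pC t ∧ 0 < pD t) := by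
  obtain ⟨⟨hs0, hdyn, hsb, hpCb, hpDb⟩, hmax⟩ := hopt
  have hdt := hdyn t ht
  have hCb := hpCb t ht
  have hDb := hpDb t ht
  have hbeta : s t - ρ * s (t - 1) = Δt * (ηC * pC t - (1 / ηD) * pD t) := by
    linarith [hdt]
  -- key: not both strictly interior
  have hkey : ¬ (pC t < PC ∧ pD t < PD) := by
    rintro ⟨h1, h2⟩
    set δ : ℝ := min (PC - pC t) ((PD - pD t) / (ηC * ηD)) with hδdef
    have hηCD : 0 < ηC * ηD := mul_pos hηC0 hηD0
    have hδ : 0 < δ := lt_min (by linarith) (div_pos (by linarith) hηCD)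
    have hδ1 : δ ≤ PC - pC t := min_le_left _ _
    have hδ2 : δ ≤ (PD - pD t) / (ηC * ηD) := min_le_right _ _
    have hδ2' : ηC * ηD * δ ≤ PD - pD t := by
      rw [div_eq_mul_inv] at hδ2
      calc ηC * ηD * δ ≤ ηC * ηD * ((PD - pD t) * (ηC * ηD)⁻¹) := by
            apply mul_le_mul_of_nonneg_left hδ2 hηCD.le
        _ = PD - pD t := by field_simp
    set pC' : ℕ → ℝ := fun u => if u = t then pC t + δ else pC u with hpC'
    set pD' : ℕ → ℝ := fun u => if u = t then pD t + ηC * ηD * δ else pD u with hpD'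
    have hfeas : feasible T Δt ρ ηC ηD Slb Sub Sinit PC PD s pC' pD' := by
      refine ⟨hs0, ?_, hsb, ?_, ?_⟩
      · intro u hu
        by_cases hut : u = t
        · subst hut
          simp only [hpC', hpD', if_pos rfl]
          have hηDne : ηD ≠ 0 := ne_of_gt hηD0
          have hc : ηC * (pC u + δ) - 1 / ηD * (pD u + ηC * ηD * δ)
              = ηC * pC u - 1 / ηD * pD u := by field_simp; ring
          rw [hc]
          exact hdyn u hu
        · simp only [hpC', hpD', if_neg hut]
          exact hdyn u hu
      · intro u hu
        by_cases hut : u = t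
        · subst hut
          simp only [hpC', if_pos rfl]
          constructor <;> linarith [hCb.1]
        · simp only [hpC', if_neg hut]; exact hpCb u hu
      · intro u hu
        by_cases hut : u = t
        · subst hut
          simp only [hpD', if_pos rfl]
          constructor
          · nlinarith [hDb.1, hηCD, hδ]
          · linarith
        · simp only [hpD', if_neg hut]; exact hpDb u hu
    have hle := hmax s pC' pD' hfeas
    have hdiff : objective T Δt C pC' pD' - objective T Δt C pC pD
        = Δt * C t * (ηC * ηD * δ - δ) := by
      unfold objective
      rw [← Finset.sum_sub_distrib]
      rw [Finset.sum_eq_single t]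
      · simp only [hpC', hpD', if_pos rfl]; ring
      · intro b _ hbt
        simp only [hpC', hpD', if_neg hbt]; ring
      · intro hnt; exact absurd ht hnt
    have hpos : 0 < Δt * C t * (ηC * ηD * δ - δ) := by
      have h1 : ηC * ηD * δ - δ < 0 := by nlinarith
      have h2 : Δt * C t < 0 := mul_neg_of_pos_of_neg hΔt hCt
      nlinarith
    linarith
  constructor
  · rintro (h | h)
    · -- β at max charge: pD t = 0
      have hpD0 : pD t = 0 := by
        have heq : ηC * pC t - (1 / ηD) * pD t = ηC * PC := by
          have : Δt * (ηC * pC t - (1 / ηD) * pD t) = Δt * (ηC * PC) := by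
            rw [← hbeta, h]; ring
          exact mul_left_cancel₀ (ne_of_gt hΔt) this
        have h1 : 0 < 1 / ηD := by positivity
        have hle0 : (1 / ηD) * pD t ≤ 0 := by
          nlinarith [mul_nonneg hηC0.le (sub_nonneg.mpr hCb.2)]
        have : pD t ≤ 0 := by
          by_contra hp
          push_neg at hp
          nlinarith [mul_pos h1 hp]
        linarith [hDb.1]
      rw [hpD0, mul_zero]
    · -- β at max discharge: pC t = 0
      have hpC0 : pC t = 0 := by
        have heq : ηC * pC t - (1 / ηD) * pD t = -((1 / ηD) * PD) := by
          have : Δt * (ηC * pC t - (1 / ηD) * pD t) = Δt * (-((1 / ηD) * PD)) := by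
            rw [← hbeta, h]; ring
          exact mul_left_cancel₀ (ne_of_gt hΔt) this
        have h1 : 0 < 1 / ηD := by positivity
        have hle0 : ηC * pC t ≤ 0 := by
          nlinarith [mul_nonneg h1.le (sub_nonneg.mpr hDb.2)]
        have hle : pC t ≤ 0 := by
          by_contra hp
          push_neg at hp
          nlinarith [mul_pos hηC0 hp]
        linarith [hCb.1]
      rw [hpC0, zero_mul]
  · rintro ⟨hlo, hhi⟩
    rw [hbeta] at hlo hhi
    have hlo' : -((1 / ηD) * PD) < ηC * pC t - (1 / ηD) * pD t := by
      have := (mul_lt_mul_iff_right₀ hΔt).mp (by linarith : Δt * (-((1 / ηD) * PD)) < Δt * (ηC * pC t - (1 / ηD) * pD t))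
      linarith
    have hhi' : ηC * pC t - (1 / ηD) * pD t < ηC * PC := by
      have := (mul_lt_mul_iff_right₀ hΔt).mp (by linarith : Δt * (ηC * pC t - (1 / ηD) * pD t) < Δt * (ηC * PC))
      linarith
    have h1 : 0 < 1 / ηD := by positivity
    constructor
    · by_contra hc
      push_neg at hc
      have hpC0 : pC t = 0 := le_antisymm hc hCb.1
      have hpDlt : pD t < PD := by
        rw [hpC0] at hlo'
        have h2' : (1 / ηD) * pD t < (1 / ηD) * PD := by nlinarith [hlo']
        exact lt_of_mul_lt_mul_left h2' h1.le
      exact hkey ⟨by linarith [hpC0], hpDlt⟩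
    · by_contra hc
      push_neg at hc
      have hpD0 : pD t = 0 := le_antisymm hc hDb.1
      have hpClt : pC t < PC := by
        rw [hpD0] at hhi'
        have h2' : ηC * pC t < ηC * PC := by nlinarith [hhi']
        exact lt_of_mul_lt_mul_left h2' hηC0.le
      exact hkey ⟨hpClt, by linarith [hpD0]⟩
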